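/- arXiv:2304.00088 — 2 statements merged into one kernel-verified Lean document; each statement's English description precedes it below -/
import Mathlib

section
/- In 2d Minkowski spacetime, for a point z and a point y in its causal past with light-cone separation (U,V) (U,V > 0), the quantity β₀ := −(1/2)∫_{∂[y,z]} dΣ_μ ∇^μ(e^{-ρσ}), computed by reducing the flux integral to endpoint evaluations along the four null boundary edges, equals −1 + e^{-ρσ(y,z)} = −1 + e^{-ρUV}. -/
set_option autoImplicit false

open MeasureTheory Real intervalIntegral

lemma deriv_int (a c b : ℝ) :
    (∫ v in (0:ℝ)..b, deriv (fun w => Real.exp (-(a * (c * w)))) v)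
      = Real.exp (-(a * (c * b))) - 1 := by
  have h : ∀ x : ℝ, HasDerivAt (fun w => Real.exp (-(a * (c * w))))
      (Real.exp (-(a * (c * x))) * (-(a * c))) x := by
    intro x
    have h1 : HasDerivAt (fun w : ℝ => -(a * (c * w))) (-(a * c)) x := by
      simpa using ((hasDerivAt_id x).const_mul c |>.const_mul a).fun_neg
    simpa using h1.exp
  rw [intervalIntegral.integral_deriv_eq_sub (fun x _ => (h x).differentiableAt)]
  · simp
  · apply Continuous.intervalIntegrable
    have : (deriv fun w => Real.exp (-(a * (c * w))))
        = fun x => Real.exp (-(a * (c * x))) * (-(a * c)) := by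
      ext x; exact (h x).deriv
    rw [this]; continuity

/-- In 2d Minkowski space, for `z` and `y ∈ J⁻(z)` with light-cone separation
`(U,V)`, the boundary quantity `β₀ := -(1/2)∫_{∂[y,z]} dΣ_μ ∇^μ(e^{-ρσ})`, computed
by reducing the flux integral to (oriented) total-derivative integrals along the
four null boundary edges — on which `σ(·,z)` equals `U·w`, `w·V`, and `0`, `0`
respectively — equals `-1 + e^{-ρσ(y,z)} = -1 + e^{-ρUV}`. -/
theorem beta0_flat (ρ U V : ℝ) (hρ : 0 < ρ) (hU : 0 < U) (hV : 0 < V) :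
    -(1 / 2) * (-((∫ v in (0:ℝ)..V, deriv (fun w => Real.exp (-(ρ * (U * w)))) v)
        + (∫ u in (0:ℝ)..U, deriv (fun w => Real.exp (-(ρ * (w * V)))) u)
        + (∫ v in (0:ℝ)..V, deriv (fun _ : ℝ => Real.exp (-(ρ * 0))) v)
        + (∫ u in (0:ℝ)..U, deriv (fun _ : ℝ => Real.exp (-(ρ * 0))) u)))
      = -1 + Real.exp (-(ρ * (U * V))) := by
  have h1 := deriv_int ρ U V
  have h2 : (∫ u in (0:ℝ)..U, deriv (fun w => Real.exp (-(ρ * (w * V)))) u)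
      = Real.exp (-(ρ * (U * V))) - 1 := by
    have := deriv_int ρ V U
    simpa [mul_comm] using this
  rw [h1, h2]
  simp
  ring
end

section
/- In 4d Minkowski spacetime, the conjecture 8π σ(y,z)² ψ(z) = ∫_{[y,z]} □□(σ(y,x)² ψ(x)) d⁴x holds for constant ψ: with σ(y,x) = τ²/2 (half the squared proper time from y to x) and [y,z] the causal interval of total proper time T between y and z, one has ∫_{[y,z]} □□(σ(y,x)²) d⁴x = 8π σ(y,z)² = 8π (T²/2)² = 2π T⁴, consistent with the flat-space interval volume V[y,z] = (π/24) T⁴. -/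
set_option autoImplicit false

open MeasureTheory Real

noncomputable section

/-- Time derivative `∂_t` on functions of 4d Minkowski space `ℝ × ℝ³`. -/
def timeDeriv (g : ℝ × EuclideanSpace ℝ (Fin 3) → ℝ) :
    ℝ × EuclideanSpace ℝ (Fin 3) → ℝ :=
  fun p => deriv (fun s => g (s, p.2)) p.1

/-- Spatial directional derivative `∂_i` on functions of 4d Minkowski space. -/
def spaceDeriv (i : Fin 3) (g : ℝ × EuclideanSpace ℝ (Fin 3) → ℝ) :
    ℝ × EuclideanSpace ℝ (Fin 3) → ℝ :=
  fun p => deriv (fun s : ℝ => g (p.1, p.2 + s • EuclideanSpace.single i (1 : ℝ))) 0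

/-- The flat d'Alembertian `□ = ∂_t² - Δ` on 4d Minkowski space. -/
def box4 (g : ℝ × EuclideanSpace ℝ (Fin 3) → ℝ) :
    ℝ × EuclideanSpace ℝ (Fin 3) → ℝ :=
  fun p => timeDeriv (timeDeriv g) p - ∑ i : Fin 3, spaceDeriv i (spaceDeriv i g) p

/-- The square of Synge's world function from the origin in 4d Minkowski space,
`σ(y,x)² = ((t² - |x⃗|²)/2)²`. -/
def syngeSq : ℝ × EuclideanSpace ℝ (Fin 3) → ℝ :=
  fun p => ((p.1 ^ 2 - ‖p.2‖ ^ 2) / 2) ^ 2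

/-- The causal interval between `y = (0,0⃗)` and `z = (T,0⃗)` in 4d Minkowski space. -/
def causalInterval (T : ℝ) : Set (ℝ × EuclideanSpace ℝ (Fin 3)) :=
  {p | ‖p.2‖ ≤ p.1 ∧ ‖p.2‖ ≤ T - p.1}

abbrev E3 := EuclideanSpace ℝ (Fin 3)

lemma hq (b c s : ℝ) : HasDerivAt (fun s : ℝ => c + 2*s*b + s^2) (2*b + 2*s) s := by
  have h1 : HasDerivAt (fun s:ℝ => s^2) (2*s) s := by simpa using hasDerivAt_pow 2 s
  have h2 : HasDerivAt (fun s:ℝ => 2*s*b) (2*b) s := by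
    simpa [mul_comm, mul_assoc, mul_left_comm] using ((hasDerivAt_id s).const_mul 2).mul_const b
  exact (h2.const_add c).add h1

lemma P1 (c t : ℝ) : deriv (fun s : ℝ => ((s^2 - c)/2)^2) t = t*(t^2 - c) := by
  have h1 : HasDerivAt (fun s:ℝ => (s^2 - c)/2) (2*t/2) t := by
    simpa using ((hasDerivAt_pow 2 t).sub_const c).div_const 2
  have h2 := h1.pow 2
  show deriv ((fun s:ℝ => (s^2 - c)/2)^2) t = _
  rw [h2.deriv]; ring

lemma P2 (c t : ℝ) : deriv (fun s : ℝ => s*(s^2 - c)) t = 3*t^2 - c := by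
  have h1 : HasDerivAt (fun s:ℝ => s*(s^2 - c)) (1*(t^2-c) + t*(2*t)) t := by
    exact ((hasDerivAt_id' t).mul ((hasDerivAt_pow 2 t).sub_const c)).congr_deriv (by norm_num)
  rw [h1.deriv]; ring

lemma P3 (a b c : ℝ) : deriv (fun s : ℝ => ((a - (c + 2*s*b + s^2))/2)^2) 0 = -b*(a - c) := by
  have h1 : HasDerivAt (fun s:ℝ => (a - (c + 2*s*b + s^2))/2) (-(2*b+2*0)/2) 0 :=
    ((hq b c 0).const_sub a).div_const 2
  have h2 := h1.pow 2
  show deriv ((fun s:ℝ => (a - (c + 2*s*b + s^2))/2)^2) 0 = _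
  rw [h2.deriv]; ring

lemma P4 (a b c : ℝ) : deriv (fun s : ℝ => -(b+s)*(a - (c + 2*s*b + s^2))) 0
    = -(a-c) + 2*b^2 := by
  have hl : HasDerivAt (fun s:ℝ => -(b+s)) (-1) 0 := by
    exact ((hasDerivAt_id (0:ℝ)).const_add b).neg
  have hr : HasDerivAt (fun s:ℝ => a - (c + 2*s*b + s^2)) (-(2*b+2*0)) 0 := (hq b c 0).const_sub a
  have h := hl.mul hr
  show deriv ((fun s:ℝ => -(b+s)) * fun s => a - (c + 2*s*b + s^2)) 0 = _
  rw [h.deriv]; ring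

lemma P5 (c t : ℝ) : deriv (fun s : ℝ => 6*s^2 - 6*c) t = 12*t := by
  have h : HasDerivAt (fun s:ℝ => 6*s^2 - 6*c) (6*(2*t)) t := by
    simpa using ((hasDerivAt_pow 2 t).const_mul 6).sub_const (6*c)
  rw [h.deriv]; ring

lemma P6 (t : ℝ) : deriv (fun s : ℝ => 12*s) t = 12 := by
  simpa using ((hasDerivAt_id t).const_mul 12).deriv

lemma P7 (a b : ℝ) (c : ℝ) : deriv (fun s : ℝ => 6*a - 6*(c + 2*s*b + s^2)) 0 = -12*b := by
  have h : HasDerivAt (fun s:ℝ => 6*a - 6*(c + 2*s*b + s^2)) (-(6*(2*b+2*0))) 0 :=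
    ((hq b c 0).const_mul 6).const_sub (6*a)
  rw [h.deriv]; ring

lemma P8 (b : ℝ) : deriv (fun s : ℝ => -12*(b+s)) 0 = -12 := by
  have h : HasDerivAt (fun s:ℝ => -12*(b+s)) (-12*1) 0 :=
    ((hasDerivAt_id (0:ℝ)).const_add b).const_mul (-12)
  rw [h.deriv]; ring


lemma normsq_shift (x : E3) (i : Fin 3) (s : ℝ) :
    ‖x + s • EuclideanSpace.single i (1:ℝ)‖ ^ 2 = ‖x‖ ^ 2 + 2*s*(x i) + s^2 := by
  have h := @norm_add_sq_real E3 _ _ x (s • EuclideanSpace.single i (1:ℝ))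
  rw [h, real_inner_smul_right, norm_smul, EuclideanSpace.inner_single_right]
  simp [EuclideanSpace.norm_single, mul_pow, abs_sq]
  ring

lemma apply_shift (x : E3) (i : Fin 3) (s : ℝ) :
    (x + s • EuclideanSpace.single i (1:ℝ)) i = x i + s := by
  simp [EuclideanSpace.single_apply]

lemma normsq_sum (x : E3) : ∑ i : Fin 3, (x i)^2 = ‖x‖^2 := by
  rw [EuclideanSpace.norm_eq, Real.sq_sqrt (by positivity)]
  simp [sq_abs]

lemma td1 : timeDeriv syngeSq = fun p => p.1*(p.1^2 - ‖p.2‖^2) := by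
  funext p; simp only [timeDeriv, syngeSq]; exact P1 _ _

lemma sd1 (i : Fin 3) : spaceDeriv i syngeSq = fun p => -(p.2 i)*(p.1^2 - ‖p.2‖^2) := by
  funext p; simp only [spaceDeriv, syngeSq, normsq_shift]; exact P3 _ _ _

lemma box1 : box4 syngeSq = fun p => 6*p.1^2 - 6*‖p.2‖^2 := by
  funext p
  have h1 : timeDeriv (timeDeriv syngeSq) p = 3*p.1^2 - ‖p.2‖^2 := by
    rw [td1]; simp only [timeDeriv]; exact P2 _ _
  have h2 : ∀ i : Fin 3, spaceDeriv i (spaceDeriv i syngeSq) p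
      = -(p.1^2 - ‖p.2‖^2) + 2*(p.2 i)^2 := by
    intro i
    rw [sd1]; simp only [spaceDeriv, normsq_shift, apply_shift]; exact P4 _ _ _
  simp only [box4, h1, h2, Finset.sum_add_distrib, Finset.sum_const, ← Finset.mul_sum,
    normsq_sum]
  simp; ring

lemma box2 (p : ℝ × E3) : box4 (box4 syngeSq) p = 48 := by
  have h1 : timeDeriv (box4 syngeSq) = fun p => 12*p.1 := by
    funext p; rw [box1]; simp only [timeDeriv]; exact P5 _ _
  have h2 : ∀ i, spaceDeriv i (box4 syngeSq) = fun p => -12*(p.2 i) := by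
    intro i; funext p; rw [box1]; simp only [spaceDeriv, normsq_shift]; exact P7 _ _ _
  have h3 : timeDeriv (timeDeriv (box4 syngeSq)) p = 12 := by
    rw [h1]; simp only [timeDeriv]; exact P6 _
  have h4 : ∀ i : Fin 3, spaceDeriv i (spaceDeriv i (box4 syngeSq)) p = -12 := by
    intro i; rw [h2]; simp only [spaceDeriv, apply_shift]; exact P8 _
  simp only [box4, h3, h4, Finset.sum_const]
  norm_num


lemma ball_vol {r : ℝ} (hr : 0 ≤ r) :
    volume (Metric.closedBall (0:E3) r) = ENNReal.ofReal (4*π/3 * r^3) := by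
  rw [EuclideanSpace.volume_closedBall]
  have hcard : (Fintype.card (Fin 3) : ℕ) = 3 := by simp
  rw [hcard]
  have hG : Real.Gamma ((3:ℕ) / 2 + 1) = 3/4 * Real.sqrt π := by
    push_cast
    have h32 : (3:ℝ)/2 + 1 = 1/2 + 1 + 1 := by norm_num
    rw [h32, Real.Gamma_add_one (by norm_num), Real.Gamma_add_one (by norm_num),
      Real.Gamma_one_half_eq]
    ring
  have hsp : Real.sqrt π ^ 3 = π * Real.sqrt π := by
    have := Real.sq_sqrt pi_nonneg
    nlinarith [Real.sqrt_nonneg π]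
  rw [hG, hsp]
  have hne : Real.sqrt π ≠ 0 := by positivity
  rw [← ENNReal.ofReal_pow hr, ← ENNReal.ofReal_mul (by positivity)]
  congr 1
  field_simp

lemma sliceCI (T t : ℝ) : (fun x : E3 => (t, x)) ⁻¹' causalInterval T
    = Metric.closedBall 0 (min t (T - t)) := by
  ext x
  simp [causalInterval, le_min_iff]

lemma meas_ci (T : ℝ) : MeasurableSet (causalInterval T) := by
  have : IsClosed (causalInterval T) := by
    have : causalInterval T = {p : ℝ × E3 | ‖p.2‖ ≤ p.1} ∩ {p : ℝ × E3 | ‖p.2‖ ≤ T - p.1} := rfl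
    rw [this]
    exact (isClosed_le continuous_snd.norm continuous_fst).inter
      (isClosed_le continuous_snd.norm (continuous_const.sub continuous_fst))
  exact this.measurableSet

lemma vol_ci (T : ℝ) (hT : 0 < T) :
    volume (causalInterval T) = ENNReal.ofReal (π / 24 * T ^ 4) := by
  set h : ℝ → ℝ := fun t => 4*π/3 * (max (min t (T-t)) 0)^3 with hh
  have hcont : Continuous h := by fun_prop
  have hzero : ∀ t ∉ Set.Icc (0:ℝ) T, h t = 0 := by
    intro t ht
    simp only [Set.mem_Icc, not_and_or, not_le] at ht
    have : max (min t (T-t)) 0 = 0 := by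
      rcases ht with h1 | h1
      · exact max_eq_right (le_trans (min_le_left _ _) h1.le)
      · exact max_eq_right (le_trans (min_le_right _ _) (by linarith))
    rw [hh]; simp [this]
  have hvol : volume (causalInterval T) = ∫⁻ t, ENNReal.ofReal (h t) := by
    rw [MeasureTheory.Measure.volume_eq_prod ℝ E3, MeasureTheory.Measure.prod_apply (meas_ci T)]
    congr 1; funext t
    have : Prod.mk t ⁻¹' causalInterval T = (fun x : E3 => (t, x)) ⁻¹' causalInterval T := rfl
    rw [this, sliceCI]
    rcases le_or_gt 0 (min t (T-t)) with hm | hm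
    · rw [ball_vol hm]; simp only [hh]; rw [max_eq_left hm]
    · rw [Metric.closedBall_eq_empty.2 hm, measure_empty]
      simp only [hh]; rw [max_eq_right hm.le]; simp
  have hInt : Integrable h := by
    apply hcont.integrable_of_hasCompactSupport
    exact HasCompactSupport.intro isCompact_Icc hzero
  rw [hvol, ← MeasureTheory.ofReal_integral_eq_lintegral_ofReal hInt (by
    filter_upwards with t
    positivity)]
  congr 1
  have hIcc : ∫ t, h t = ∫ t in Set.Icc 0 T, h t :=
    (setIntegral_eq_integral_of_forall_compl_eq_zero hzero).symm
  rw [hIcc, MeasureTheory.integral_Icc_eq_integral_Ioc,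
    ← intervalIntegral.integral_of_le hT.le]
  have hsplit : ∫ t in (0:ℝ)..T, h t
      = (∫ t in (0:ℝ)..(T/2), h t) + ∫ t in (T/2)..T, h t := by
    rw [intervalIntegral.integral_add_adjacent_intervals] <;>
      exact hcont.intervalIntegrable _ _
  have h1 : ∫ t in (0:ℝ)..(T/2), h t = ∫ t in (0:ℝ)..(T/2), 4*π/3 * t^3 := by
    apply intervalIntegral.integral_congr
    intro t ht
    rw [Set.uIcc_of_le (by linarith)] at ht
    obtain ⟨ht0, ht1⟩ := ht
    have : min t (T - t) = t := min_eq_left (by linarith)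
    rw [hh]; simp only [this, max_eq_left ht0]
  have h2 : ∫ t in (T/2)..T, h t = ∫ t in (T/2)..T, 4*π/3 * (T-t)^3 := by
    apply intervalIntegral.integral_congr
    intro t ht
    rw [Set.uIcc_of_le (by linarith)] at ht
    obtain ⟨ht0, ht1⟩ := ht
    have hmin : min t (T - t) = T - t := min_eq_right (by linarith)
    rw [hh]; simp only [hmin, max_eq_left (by linarith : (0:ℝ) ≤ T - t)]
  rw [hsplit, h1, h2]
  rw [intervalIntegral.integral_const_mul, intervalIntegral.integral_const_mul,
    integral_pow]
  have h3 : ∫ t in (T/2)..T, (T-t)^3 = ∫ x in (T-T)..(T-T/2), x^3 :=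
    intervalIntegral.integral_comp_sub_left (fun x => x^3) T
  rw [h3, integral_pow]
  norm_num
  ring

/-- In 4d Minkowski spacetime the conjecture
`8π σ(y,z)² ψ(z) = ∫_{[y,z]} □□(σ(y,x)² ψ(x)) d⁴x` holds for constant `ψ`:
with `y` the origin, `z = (T,0⃗)` (so `σ(y,z) = T²/2`), one has
`∫_{[y,z]} □□(σ²) d⁴x = 8π (T²/2)² = 2π T⁴`, consistent with the interval volume
`V[y,z] = (π/24) T⁴`. -/
theorem conjecture_4d_constant_psi (T : ℝ) (hT : 0 < T) :
    (∫ p in causalInterval T, box4 (box4 syngeSq) p = 8 * π * (T ^ 2 / 2) ^ 2) ∧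
    (8 * π * (T ^ 2 / 2) ^ 2 = 2 * π * T ^ 4) ∧
    volume (causalInterval T) = ENNReal.ofReal (π / 24 * T ^ 4) := by
  refine ⟨?_, by ring, vol_ci T hT⟩
  have hnn : (0:ℝ) ≤ π / 24 * T ^ 4 := by positivity
  calc ∫ p in causalInterval T, box4 (box4 syngeSq) p
      = ∫ _p in causalInterval T, (48:ℝ) := by
        exact setIntegral_congr_fun (meas_ci T) (fun p _ => box2 p)
    _ = (volume (causalInterval T)).toReal • (48:ℝ) := setIntegral_const _
    _ = 8 * π * (T ^ 2 / 2) ^ 2 := by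
        rw [vol_ci T hT, ENNReal.toReal_ofReal hnn]
        simp only [smul_eq_mul]; ring

end
end
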